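/- In a purple-edge-minimal pair of labellings with purple edge uv, for all a ∈ A*(u) and b ∈ B(u), there is a red–blue-link from a to b, i.e., a vertex a' with aa' ∈ E(G_2) and a'b ∈ E(G_1). -/

import Mathlib

def pcount {n : ℕ} (G1 G2 : SimpleGraph (Fin n))
    [DecidableRel G1.Adj] [DecidableRel G2.Adj] (τ : Equiv.Perm (Fin n)) : ℕ :=
  (Finset.univ.filter fun p : Fin n × Fin n =>
    G1.Adj p.1 p.2 ∧ G2.Adj (τ p.1) (τ p.2)).card

/-- Claim 2: for all `a ∈ A*(u)` and `b ∈ B(u)` there is a red–blue-link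
from `a` to `b`. -/
theorem stmt_6 {n : ℕ} (G1 G2 : SimpleGraph (Fin n))
    [DecidableRel G1.Adj] [DecidableRel G2.Adj]
    (hBEC : (G1.maxDegree + 1) * (G2.maxDegree + 1) ≤ n + 1)
    (hmin : ∀ τ : Equiv.Perm (Fin n), pcount G1 G2 1 ≤ pcount G1 G2 τ)
    (u v : Fin n) (hp : G1.Adj u v ∧ G2.Adj u v) :
    ∀ a ∈ ((G1.neighborFinset u).biUnion (fun x => G2.neighborFinset x)) \
        (G2.neighborFinset u ∪ (G2.neighborFinset u).biUnion (fun x => G1.neighborFinset x)),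
      ∀ b ∈ ((G2.neighborFinset u).biUnion (fun x => G1.neighborFinset x)) \
        (G1.neighborFinset u ∪ G2.neighborFinset u ∪
          (G1.neighborFinset u).biUnion (fun x => G2.neighborFinset x)),
      ∃ a', G2.Adj a a' ∧ G1.Adj a' b := by
  rintro a ha b hb
  by_contra hlink
  push_neg at hlink
  simp only [Finset.mem_sdiff, Finset.mem_union, Finset.mem_biUnion,
    SimpleGraph.mem_neighborFinset, not_or, not_exists, not_and] at ha hb
  obtain ⟨⟨w, hw1, hw2⟩, hau, haz⟩ := ha
  obtain ⟨⟨z, hz1, hz2⟩, ⟨hbu1, hbu2⟩, hbw⟩ := hb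
  -- distinctness of u, a, b
  have hanu : a ≠ u := by
    intro h; exact haz v hp.2 (by rw [h]; exact hp.1.symm)
  have hbnu : b ≠ u := by
    intro h; exact hbw v hp.1 (by rw [h]; exact hp.2.symm)
  have hanb : a ≠ b := by
    intro h; exact haz z hz1 (by rw [h]; exact hz2)
  set τ : Equiv.Perm (Fin n) := Equiv.swap u a * Equiv.swap u b with hτ
  have htu : τ u = b := by
    rw [hτ, Equiv.Perm.mul_apply, Equiv.swap_apply_left,
      Equiv.swap_apply_of_ne_of_ne hbnu (Ne.symm hanb)]
  have htb : τ b = a := by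
    rw [hτ, Equiv.Perm.mul_apply, Equiv.swap_apply_right, Equiv.swap_apply_left]
  have hta : τ a = u := by
    rw [hτ, Equiv.Perm.mul_apply,
      Equiv.swap_apply_of_ne_of_ne hanu hanb, Equiv.swap_apply_right]
  have hfix : ∀ x : Fin n, x ≠ u → x ≠ a → x ≠ b → τ x = x := by
    intro x h1 h2 h3
    rw [hτ, Equiv.Perm.mul_apply, Equiv.swap_apply_of_ne_of_ne h1 h3,
      Equiv.swap_apply_of_ne_of_ne h1 h2]
  -- no purple pair under τ touches u, a or b
  have key : ∀ x y : Fin n, G1.Adj x y → G2.Adj (τ x) (τ y) →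
      x ≠ u ∧ x ≠ a ∧ x ≠ b := by
    intro x y hxy hred
    refine ⟨?_, ?_, ?_⟩
    · rintro rfl
      rw [htu] at hred
      by_cases h1 : y = x; · exact hxy.ne (h1.symm)
      by_cases h2 : y = a
      · subst h2; rw [hta] at hred; exact hbu2 hred.symm
      by_cases h3 : y = b
      · subst h3; exact hbu1 hxy
      rw [hfix y h1 h2 h3] at hred
      exact hbw y hxy hred.symm
    · rintro rfl
      rw [hta] at hred
      by_cases h1 : y = u
      · subst h1; rw [htu] at hred; exact hbu2 hred
      by_cases h2 : y = x; · exact hxy.ne (h2.symm)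
      by_cases h3 : y = b
      · subst h3; rw [htb] at hred; exact hau hred
      rw [hfix y h1 h2 h3] at hred
      exact haz y hred hxy.symm
    · rintro rfl
      rw [htb] at hred
      by_cases h1 : y = u
      · subst h1; exact hbu1 hxy.symm
      by_cases h2 : y = a
      · subst h2; rw [hta] at hred; exact hau hred.symm
      by_cases h3 : y = x; · exact hxy.ne (h3.symm)
      rw [hfix y h1 h2 h3] at hred
      exact hlink y hred hxy.symm
  -- τ strictly decreases the purple count: contradiction
  have hcard : pcount G1 G2 τ < pcount G1 G2 1 := by
    unfold pcount
    have hsub : (Finset.univ.filter fun p : Fin n × Fin n =>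
        G1.Adj p.1 p.2 ∧ G2.Adj (τ p.1) (τ p.2)) ⊆
        ((Finset.univ.filter fun p : Fin n × Fin n =>
          G1.Adj p.1 p.2 ∧ G2.Adj ((1 : Equiv.Perm (Fin n)) p.1)
            ((1 : Equiv.Perm (Fin n)) p.2)).erase (u, v)) := by
      intro p hp'
      simp only [Finset.mem_filter, Finset.mem_univ, true_and] at hp'
      obtain ⟨h1, h2⟩ := hp'
      obtain ⟨k1, k2, k3⟩ := key p.1 p.2 h1 h2
      obtain ⟨l1, l2, l3⟩ := key p.2 p.1 h1.symm h2.symm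
      rw [hfix p.1 k1 k2 k3, hfix p.2 l1 l2 l3] at h2
      rw [Finset.mem_erase]
      refine ⟨?_, ?_⟩
      · intro h; apply k1; rw [h]
      · simp only [Finset.mem_filter, Finset.mem_univ, true_and,
          Equiv.Perm.one_apply]
        exact Finset.mem_filter.mpr ⟨Finset.mem_univ _, h1, h2⟩
    calc (Finset.univ.filter fun p : Fin n × Fin n =>
          G1.Adj p.1 p.2 ∧ G2.Adj (τ p.1) (τ p.2)).card
        ≤ ((Finset.univ.filter fun p : Fin n × Fin n =>
          G1.Adj p.1 p.2 ∧ G2.Adj ((1 : Equiv.Perm (Fin n)) p.1)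
            ((1 : Equiv.Perm (Fin n)) p.2)).erase (u, v)).card :=
          Finset.card_le_card hsub
      _ < _ := by
          apply Finset.card_erase_lt_of_mem
          simp only [Finset.mem_filter, Finset.mem_univ, true_and,
            Equiv.Perm.one_apply]
          exact Finset.mem_filter.mpr ⟨Finset.mem_univ _, hp⟩
  exact absurd (hmin τ) (by omega)
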